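/- For any spanning tree $s$ of the $n \times n$ eight-neighbor grid rooted at a corner outlet ($n \ge 2$), with unit link lengths, the energy $H_{1/2}(s) = \sum_{x \ne \text{outlet}} \sqrt{A_x}$ satisfies $H_{1/2}(s) \ge \frac{3}{2}n^2 - \frac{7}{2}n + 1$. -/

import Mathlib

/-- The king-move (eight-neighbor) graph on `{0, …, n-1}²`: distinct vertices are
adjacent iff they differ by at most 1 in each coordinate. -/
def kingGraph (n : ℕ) : SimpleGraph (Fin n × Fin n) where
  Adj x y := x ≠ y ∧ ((x.1 : ℤ) - (y.1 : ℤ)).natAbs ≤ 1 ∧ ((x.2 : ℤ) - (y.2 : ℤ)).natAbs ≤ 1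
  symm := by
    constructor
    rintro x y ⟨h1, h2, h3⟩
    exact ⟨h1.symm, by omega, by omega⟩
  loopless := by constructor; rintro x ⟨h, -⟩; exact h rfl


private lemma sqrt_one_plus (a b : ℝ) (ha : 1 ≤ a) (hb : 1 ≤ b) :
    1 + Real.sqrt (a + b - 1) ≤ Real.sqrt a + Real.sqrt b := by
  have h0a : (0:ℝ) ≤ a := by linarith
  have h0b : (0:ℝ) ≤ b := by linarith
  have h1 : Real.sqrt (a + b - 1) ≤ Real.sqrt a * Real.sqrt b := by
    rw [← Real.sqrt_mul h0a]
    exact Real.sqrt_le_sqrt (by nlinarith)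
  have e1 := Real.sq_sqrt h0a
  have e2 := Real.sq_sqrt h0b
  have e3 := Real.sq_sqrt (show (0:ℝ) ≤ a + b - 1 by linarith)
  have hsq : (1 + Real.sqrt (a+b-1))^2 ≤ (Real.sqrt a + Real.sqrt b)^2 := by nlinarith [h1]
  nlinarith [hsq, Real.sqrt_nonneg (a+b-1), Real.sqrt_nonneg a, Real.sqrt_nonneg b]

private lemma conc {α : Type*} [DecidableEq α] (T : Finset α) (f : α → ℕ)
    (hf : ∀ x ∈ T, 1 ≤ f x) :
    ((T.card : ℝ) - 1) + Real.sqrt ((∑ x ∈ T, (f x : ℝ)) - T.card + 1)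
      ≤ ∑ x ∈ T, Real.sqrt (f x) := by
  induction T using Finset.cons_induction with
  | empty => norm_num
  | cons a T' h ih =>
    have hfa : (1:ℝ) ≤ f a := by exact_mod_cast hf a (Finset.mem_cons_self a T')
    have hf' : ∀ x ∈ T', 1 ≤ f x := fun x hx => hf x (Finset.mem_cons_of_mem hx)
    have hS : (T'.card : ℝ) ≤ ∑ x ∈ T', (f x : ℝ) := by
      calc (T'.card : ℝ) = ∑ _x ∈ T', (1:ℝ) := by simp
        _ ≤ ∑ x ∈ T', (f x : ℝ) := Finset.sum_le_sum (fun x hx => by exact_mod_cast hf' x hx)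
    have key := sqrt_one_plus (f a) ((∑ x ∈ T', (f x:ℝ)) - T'.card + 1) hfa (by linarith)
    have harg : (f a:ℝ) + ((∑ x ∈ T', (f x:ℝ)) - T'.card + 1) - 1
        = ((f a:ℝ) + ∑ x ∈ T', (f x:ℝ)) - (T'.card + 1) + 1 := by ring
    rw [harg] at key
    have ih' := ih hf'
    simp only [Finset.sum_cons, Finset.card_cons]
    push_cast
    linarith

private lemma ivt (f : ℕ → ℕ) (hstep : ∀ j, f j ≤ f (j+1) + 1) (k m : ℕ)
    (h0 : k ≤ f 0) (hm : f m ≤ k) : ∃ j, f j = k := by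
  by_contra h
  push_neg at h
  have H : ∀ j, k + 1 ≤ f j := by
    intro j; induction j with
    | zero => have := h 0; omega
    | succ j ihj => have h1 := hstep j; have h2 := h (j+1); omega
  have := H m; omega

private lemma card_fin_lt (n k : ℕ) (hk : k ≤ n) :
    (Finset.univ.filter fun i : Fin n => (i : ℕ) < k).card = k := by
  have he : (Finset.univ.filter fun i : Fin n => (i : ℕ) < k)
      = (Finset.range k).attachFin (fun m hm => lt_of_lt_of_le (Finset.mem_range.mp hm) hk) := by
    ext i; simp [Finset.mem_attachFin]
  rw [he, Finset.card_attachFin, Finset.card_range]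

private lemma card_maxlt (n k : ℕ) (hk : k ≤ n) :
    (Finset.univ.filter fun y : Fin n × Fin n => max (y.1:ℕ) (y.2:ℕ) < k).card = k * k := by
  have he : (Finset.univ.filter fun y : Fin n × Fin n => max (y.1:ℕ) (y.2:ℕ) < k)
      = (Finset.univ.filter fun i : Fin n => (i:ℕ) < k) ×ˢ
        (Finset.univ.filter fun i : Fin n => (i:ℕ) < k) := by
    ext y; simp [Finset.mem_product, max_lt_iff, and_assoc]
  rw [he, Finset.card_product, card_fin_lt n k hk]

private lemma card_maxeq (n k : ℕ) (hk : k + 1 ≤ n) :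
    (Finset.univ.filter fun y : Fin n × Fin n => max (y.1:ℕ) (y.2:ℕ) = k).card = 2 * k + 1 := by
  classical
  have h1 := card_maxlt n (k+1) hk
  have h2 := card_maxlt n k (by omega)
  have hsplit : (Finset.univ.filter fun y : Fin n × Fin n => max (y.1:ℕ) (y.2:ℕ) < k+1)
      = (Finset.univ.filter fun y : Fin n × Fin n => max (y.1:ℕ) (y.2:ℕ) = k)
        ∪ (Finset.univ.filter fun y : Fin n × Fin n => max (y.1:ℕ) (y.2:ℕ) < k) := by
    ext y; simp; omega
  have hdisj : Disjoint (Finset.univ.filter fun y : Fin n × Fin n => max (y.1:ℕ) (y.2:ℕ) = k)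
      (Finset.univ.filter fun y : Fin n × Fin n => max (y.1:ℕ) (y.2:ℕ) < k) := by
    rw [Finset.disjoint_left]
    intro y hy hy'
    simp only [Finset.mem_filter] at hy hy'
    omega
  rw [hsplit, Finset.card_union_of_disjoint hdisj, h2] at h1
  have e1 : (k+1)*(k+1) = k*k + (2*k+1) := by ring
  omega

private lemma gauss (m : ℕ) : ∑ i ∈ Finset.range m, (i:ℝ) = m*((m:ℝ)-1)/2 := by
  induction m with
  | zero => simp
  | succ m ih => rw [Finset.sum_range_succ, ih]; push_cast; ring

open scoped Classical in
/-- For any spanning tree of the `n × n` eight-neighbor grid rooted at a corner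
outlet (`n ≥ 2`), with unit link lengths, the energy
`H_{1/2}(s) = ∑_{x ≠ outlet} √(A_x)` is at least `(3/2)n² - (7/2)n + 1`, where
`A_x` is the subtree size at `x`. -/
theorem stmt_15 (n : ℕ) (hn2 : 2 ≤ n) (hn : 0 < n)
    (parent : Fin n × Fin n → Fin n × Fin n)
    (root : Fin n × Fin n) (hrootdef : root = (⟨0, hn⟩, ⟨0, hn⟩))
    (hroot : parent root = root)
    (hadj : ∀ v : Fin n × Fin n, v ≠ root → (kingGraph n).Adj (parent v) v)
    (hreach : ∀ v : Fin n × Fin n, ∃ m : ℕ, parent^[m] v = root)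
    (A : Fin n × Fin n → ℕ)
    (hA : ∀ x : Fin n × Fin n,
      A x = (Finset.univ.filter fun y : Fin n × Fin n => ∃ m : ℕ, parent^[m] y = x).card) :
    ∑ x ∈ Finset.univ.filter (fun v : Fin n × Fin n => v ≠ root), Real.sqrt (A x)
      ≥ 3 / 2 * (n : ℝ) ^ 2 - 7 / 2 * (n : ℝ) + 1 := by
  classical
  set s : Fin n × Fin n → ℕ := fun v => max (v.1:ℕ) (v.2:ℕ) with hs
  set C : ℕ → Finset (Fin n × Fin n) := fun k => Finset.univ.filter (fun x => s x = k) with hC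
  -- every subtree is nonempty
  have hA1 : ∀ x, 1 ≤ A x := by
    intro x
    rw [hA]
    refine Finset.card_pos.mpr ⟨x, ?_⟩
    simp only [Finset.mem_filter, Finset.mem_univ, true_and]
    exact ⟨0, rfl⟩
  have hsroot : s root = 0 := by rw [hrootdef]; simp [hs]
  have hrooteq : ∀ v, s v = 0 → v = root := by
    intro v hv
    simp only [hs] at hv
    rw [hrootdef]
    have h1 : (v.1:ℕ) = 0 := by omega
    have h2 : (v.2:ℕ) = 0 := by omega
    exact Prod.ext (Fin.ext h1) (Fin.ext h2)
  have hslt : ∀ v, s v < n := by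
    intro v; simp only [hs]
    exact max_lt v.1.isLt v.2.isLt
  have hstep : ∀ v, s v ≤ s (parent v) + 1 := by
    intro v
    by_cases hv : v = root
    · rw [hv, hroot]; omega
    · obtain ⟨-, h1, h2⟩ := hadj v hv
      simp only [hs]
      have e1 : ((parent v).1 : ℤ) = ((parent v).1 : ℕ) := rfl
      have e2 : ((parent v).2 : ℤ) = ((parent v).2 : ℕ) := rfl
      have e3 : (v.1 : ℤ) = (v.1 : ℕ) := rfl
      have e4 : (v.2 : ℤ) = (v.2 : ℕ) := rfl
      rw [e1, e3] at h1
      rw [e2, e4] at h2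
      omega
  -- ancestors at each level
  have hanc : ∀ (y : Fin n × Fin n) (k : ℕ), k ≤ s y →
      ∃ x, s x = k ∧ ∃ m, parent^[m] y = x := by
    intro y k hk
    obtain ⟨m, hm⟩ := hreach y
    obtain ⟨j, hj⟩ := ivt (fun j => s (parent^[j] y))
      (fun j => by
        have h := hstep (parent^[j] y)
        rw [← Function.iterate_succ_apply' parent j y] at h
        exact h)
      k m (by simpa using hk) (by simp only [hm, hsroot]; omega)
    exact ⟨parent^[j] y, hj, j, rfl⟩
  -- stripe mass bound
  have hsum : ∀ k : ℕ, (Finset.univ.filter fun y : Fin n × Fin n => k ≤ s y).card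
      ≤ ∑ x ∈ C k, A x := by
    intro k
    have hsub : (Finset.univ.filter fun y : Fin n × Fin n => k ≤ s y)
        ⊆ (C k).biUnion (fun x => Finset.univ.filter fun y => ∃ m, parent^[m] y = x) := by
      intro y hy
      simp only [Finset.mem_filter, Finset.mem_univ, true_and] at hy
      obtain ⟨x, hx1, hx2⟩ := hanc y k hy
      rw [Finset.mem_biUnion]
      refine ⟨x, ?_, ?_⟩
      · simp only [hC, Finset.mem_filter, Finset.mem_univ, true_and]; exact hx1
      · simp only [Finset.mem_filter, Finset.mem_univ, true_and]; exact hx2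
    calc (Finset.univ.filter fun y : Fin n × Fin n => k ≤ s y).card
        ≤ ((C k).biUnion (fun x => Finset.univ.filter fun y => ∃ m, parent^[m] y = x)).card :=
          Finset.card_le_card hsub
      _ ≤ ∑ x ∈ C k, (Finset.univ.filter fun y => ∃ m, parent^[m] y = x).card :=
          Finset.card_biUnion_le
      _ = ∑ x ∈ C k, A x := by
          refine Finset.sum_congr rfl fun x _ => ?_
          rw [hA]
  -- cardinality of the "far" region
  have hfar : ∀ k : ℕ, k ≤ n →
      (Finset.univ.filter fun y : Fin n × Fin n => k ≤ s y).card = n*n - k*k := by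
    intro k hk
    have h := Finset.card_filter_add_card_filter_not
      (s := (Finset.univ : Finset (Fin n × Fin n))) (p := fun y => s y < k)
    have hcu : (Finset.univ : Finset (Fin n × Fin n)).card = n * n := by
      simp [Finset.card_univ]
    have hlt : (Finset.univ.filter fun y : Fin n × Fin n => s y < k).card = k * k :=
      card_maxlt n k hk
    have hne : (Finset.univ.filter fun y : Fin n × Fin n => ¬ (s y < k))
        = (Finset.univ.filter fun y : Fin n × Fin n => k ≤ s y) := by
      apply Finset.filter_congr; intro y _; simp [not_lt]
    rw [hne, hcu, hlt] at h
    omega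
  -- per-stripe lower bound
  have key : ∀ k ∈ Finset.Ico 1 n, (n:ℝ) + k - 1 ≤ ∑ x ∈ C k, Real.sqrt (A x) := by
    intro k hk
    rw [Finset.mem_Ico] at hk
    have hc : (C k).card = 2*k+1 := card_maxeq n k (by omega)
    have hSnat : n*n - k*k ≤ ∑ x ∈ C k, A x := by
      rw [← hfar k (by omega)]; exact hsum k
    have hkk : k*k ≤ n*n := Nat.mul_le_mul (by omega) (by omega)
    have hScast : (n:ℝ)*n - k*k ≤ ∑ x ∈ C k, (A x:ℝ) := by
      have h1 : ((n*n - k*k : ℕ) : ℝ) ≤ ((∑ x ∈ C k, A x : ℕ) : ℝ) := by exact_mod_cast hSnat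
      rw [Nat.cast_sub hkk] at h1
      push_cast at h1
      linarith
    have h1 := conc (C k) A (fun x _ => hA1 x)
    rw [hc] at h1
    have hnk : (k:ℝ) + 1 ≤ (n:ℝ) := by exact_mod_cast hk.2
    have hk1 : (1:ℝ) ≤ (k:ℝ) := by exact_mod_cast hk.1
    have hs1 : (n:ℝ) - k - 1 ≤ Real.sqrt ((∑ x ∈ C k, (A x:ℝ)) - (2*k+1 : ℕ) + 1) := by
      have harg : ((n:ℝ) - k - 1)^2 ≤ (∑ x ∈ C k, (A x:ℝ)) - (2*k+1 : ℕ) + 1 := by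
        push_cast
        nlinarith [hScast, hnk, hk1]
      calc (n:ℝ) - k - 1 = Real.sqrt (((n:ℝ) - k - 1)^2) := by
            rw [Real.sqrt_sq (by linarith)]
        _ ≤ _ := Real.sqrt_le_sqrt harg
    push_cast at h1 hs1
    linarith
  -- split the total sum by stripes
  have hmaps : ∀ x ∈ Finset.univ.filter (fun v : Fin n × Fin n => v ≠ root),
      s x ∈ Finset.Ico 1 n := by
    intro x hx
    simp only [Finset.mem_filter, Finset.mem_univ, true_and] at hx
    rw [Finset.mem_Ico]
    refine ⟨?_, hslt x⟩
    by_contra h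
    exact hx (hrooteq x (by omega))
  have hsplit := Finset.sum_fiberwise_of_maps_to hmaps (fun x => Real.sqrt (A x))
  have hfib : ∀ k ∈ Finset.Ico 1 n,
      ((Finset.univ.filter (fun v : Fin n × Fin n => v ≠ root)).filter fun x => s x = k)
        = C k := by
    intro k hk
    rw [Finset.mem_Ico] at hk
    rw [Finset.filter_filter]
    apply Finset.filter_congr
    intro x _
    constructor
    · exact fun h => h.2
    · intro h
      refine ⟨?_, h⟩
      intro hx
      rw [hx, hsroot] at h
      omega
  rw [← hsplit]
  have hbound : ∑ k ∈ Finset.Ico 1 n, ((n:ℝ) + k - 1)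
      ≤ ∑ k ∈ Finset.Ico 1 n,
          ∑ x ∈ (Finset.univ.filter (fun v : Fin n × Fin n => v ≠ root)).filter
            (fun x => s x = k), Real.sqrt (A x) := by
    refine Finset.sum_le_sum fun k hk => ?_
    rw [hfib k hk]
    exact key k hk
  refine le_trans ?_ hbound
  -- arithmetic
  have hn1 : (1:ℕ) ≤ n := by omega
  rw [Finset.sum_Ico_eq_sub _ hn1]
  have hr : ∑ k ∈ Finset.range n, ((n:ℝ) + k - 1)
      = n * ((n:ℝ) - 1) + n*((n:ℝ)-1)/2 := by
    rw [Finset.sum_sub_distrib, Finset.sum_add_distrib, gauss]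
    simp
    ring
  have hr1 : ∑ k ∈ Finset.range 1, ((n:ℝ) + k - 1) = (n:ℝ) - 1 := by
    simp
  rw [hr, hr1]
  have hcn : (2:ℝ) ≤ (n:ℝ) := by exact_mod_cast hn2
  nlinarith [hcn]
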